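/- Every measurable subset of the plane with infinite Lebesgue measure contains the three vertices of a (non-degenerate) triangle of area exactly 1. -/
import Mathlib


open MeasureTheory

open Set Pointwise

/-- Twice the signed area determinant helper: area of triangle `A B C`. -/
noncomputable def triangleArea (A B C : ℝ × ℝ) : ℝ :=
  |(B.1 - A.1) * (C.2 - A.2) - (C.1 - A.1) * (B.2 - A.2)| / 2

/-- If the determinant of `B - A` and `C - A` is nonzero, the points are not collinear. -/
lemma not_collinear_of_det (A B C : ℝ × ℝ)
    (h : (B.1 - A.1) * (C.2 - A.2) - (C.1 - A.1) * (B.2 - A.2) ≠ 0) :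
    ¬ Collinear ℝ ({A, B, C} : Set (ℝ × ℝ)) := by
  intro hc
  rw [collinear_iff_of_mem (Set.mem_insert A _)] at hc
  obtain ⟨v, hv⟩ := hc
  obtain ⟨tB, htB⟩ := hv B (by simp)
  obtain ⟨tC, htC⟩ := hv C (by simp)
  apply h
  have eB1 : B.1 = tB * v.1 + A.1 := by rw [htB]; rfl
  have eB2 : B.2 = tB * v.2 + A.2 := by rw [htB]; rfl
  have eC1 : C.1 = tC * v.1 + A.1 := by rw [htC]; rfl
  have eC2 : C.2 = tC * v.2 + A.2 := by rw [htC]; rfl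
  rw [eB1, eB2, eC1, eC2]; ring

/-- Main construction: if `S` has positive measure and unbounded first coordinates, we can find
a vertical segment pair and a far point giving determinant exactly `2`.  By Fubini some
vertical slice has positive measure; by Steinhaus its difference set contains an interval
`(-ε, ε)`; taking a point `z ∈ S` with `|z.1 - x₀| > 2/ε` we can realize the vertical gap
`2 / (z.1 - x₀)` exactly within the slice. -/
lemma main_lemma (S : Set (ℝ × ℝ)) (hS : MeasurableSet S) (hpos : volume S ≠ 0)
    (hx : ∀ R : ℝ, ∃ z ∈ S, R < |z.1|) :
    ∃ x₀ a b z, (x₀, a) ∈ S ∧ (x₀, b) ∈ S ∧ z ∈ S ∧ (z.1 - x₀) * (b - a) = 2 := by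
  obtain ⟨x₀, hx₀⟩ : ∃ x₀ : ℝ, volume (Prod.mk x₀ ⁻¹' S) ≠ 0 := by
    by_contra h
    push_neg at h
    apply hpos
    rw [Measure.volume_eq_prod, Measure.prod_apply hS]
    simp [h]
  set E := Prod.mk x₀ ⁻¹' S with hEdef
  have hEm : MeasurableSet E := hS.preimage measurable_prodMk_left
  have hEpos : 0 < volume E := pos_iff_ne_zero.2 hx₀
  have hst : E - E ∈ nhds (0 : ℝ) :=
    Measure.sub_mem_nhds_zero_of_addHaar_pos volume E hEm hEpos
  obtain ⟨ε, hε, hball⟩ := Metric.mem_nhds_iff.1 hst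
  obtain ⟨z, hzS, hz⟩ := hx (|x₀| + 2 / ε)
  have h2ε : (0:ℝ) < 2 / ε := by positivity
  have h1 : 2 / ε < |z.1 - x₀| := by
    have := abs_sub_abs_le_abs_sub z.1 x₀
    linarith
  have habs : (0:ℝ) < |z.1 - x₀| := lt_trans h2ε h1
  have hzx : z.1 - x₀ ≠ 0 := by
    intro h; rw [h] at habs; simp at habs
  have hd : (2 / (z.1 - x₀)) ∈ Metric.ball (0:ℝ) ε := by
    simp only [Metric.mem_ball, Real.dist_eq, sub_zero, abs_div]
    have h2 : |(2:ℝ)| = 2 := by norm_num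
    rw [h2, div_lt_iff₀ habs]
    have h3 : ε * (2 / ε) = 2 := by field_simp
    nlinarith [mul_lt_mul_of_pos_left h1 hε]
  obtain ⟨b, hb, a, ha, hba⟩ := Set.mem_sub.1 (hball hd)
  refine ⟨x₀, a, b, z, ha, hb, hzS, ?_⟩
  rw [hba]
  field_simp

/-- Every measurable subset of the plane with infinite Lebesgue measure contains the three
vertices of a non-degenerate triangle of area exactly 1. -/
theorem infinite_measure_set_contains_unit_area_triangle
    (S : Set (ℝ × ℝ)) (hS : MeasurableSet S) (hvol : volume S = ⊤) :
    ∃ A ∈ S, ∃ B ∈ S, ∃ C ∈ S,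
      ¬ Collinear ℝ ({A, B, C} : Set (ℝ × ℝ)) ∧ triangleArea A B C = 1 := by
  have hpos : volume S ≠ 0 := by rw [hvol]; simp
  by_cases hx : ∀ R : ℝ, ∃ z ∈ S, R < |z.1|
  · obtain ⟨x₀, a, b, z, ha, hb, hz, hdet⟩ := main_lemma S hS hpos hx
    have hdval : ((x₀, b).1 - (x₀, a).1) * (z.2 - (x₀, a).2)
        - (z.1 - (x₀, a).1) * ((x₀, b).2 - (x₀, a).2) = -2 := by
      simp only
      rw [sub_self, zero_mul, zero_sub, hdet]
    refine ⟨(x₀, a), ha, (x₀, b), hb, z, hz, ?_, ?_⟩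
    · exact not_collinear_of_det _ _ _ (by rw [hdval]; norm_num)
    · rw [triangleArea, hdval]; norm_num
  · push_neg at hx
    obtain ⟨R₀, hR₀⟩ := hx
    have hy : ∀ R : ℝ, ∃ z ∈ S, R < |z.2| := by
      by_contra h
      push_neg at h
      obtain ⟨R₁, hR₁⟩ := h
      have hsub : S ⊆ Set.Icc (-R₀) R₀ ×ˢ Set.Icc (-R₁) R₁ := by
        intro w hw
        have h1 := hR₀ w hw
        have h2 := hR₁ w hw
        constructor
        · constructor <;> [linarith [neg_abs_le w.1]; linarith [le_abs_self w.1]]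
        · constructor <;> [linarith [neg_abs_le w.2]; linarith [le_abs_self w.2]]
      have hfin : volume (Set.Icc (-R₀) R₀ ×ˢ Set.Icc (-R₁) R₁) < ⊤ := by
        rw [Measure.volume_eq_prod, Measure.prod_prod, Real.volume_Icc, Real.volume_Icc]
        exact ENNReal.mul_lt_top ENNReal.ofReal_lt_top ENNReal.ofReal_lt_top
      have := (measure_mono hsub).trans_lt hfin
      rw [hvol] at this
      exact absurd this (lt_irrefl _)
    set S' : Set (ℝ × ℝ) := Prod.swap ⁻¹' S with hS'def
    have hS' : MeasurableSet S' := hS.preimage measurable_swap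
    have hmp : MeasurePreserving (Prod.swap : ℝ × ℝ → ℝ × ℝ) volume volume := by
      rw [Measure.volume_eq_prod]; exact Measure.measurePreserving_swap
    have hpos' : volume S' ≠ 0 := by
      rw [hS'def, hmp.measure_preimage hS.nullMeasurableSet]; exact hpos
    have hx' : ∀ R : ℝ, ∃ z ∈ S', R < |z.1| := by
      intro R
      obtain ⟨z, hz, hzR⟩ := hy R
      exact ⟨(z.2, z.1), by simpa [hS'def] using hz, hzR⟩
    obtain ⟨x₀, a, b, z, ha, hb, hz, hdet⟩ := main_lemma S' hS' hpos' hx'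
    have ha' : ((a, x₀) : ℝ × ℝ) ∈ S := ha
    have hb' : ((b, x₀) : ℝ × ℝ) ∈ S := hb
    have hz' : ((z.2, z.1) : ℝ × ℝ) ∈ S := hz
    have hdval : (((b, x₀) : ℝ × ℝ).1 - ((a, x₀) : ℝ × ℝ).1)
          * (((z.2, z.1) : ℝ × ℝ).2 - ((a, x₀) : ℝ × ℝ).2)
        - (((z.2, z.1) : ℝ × ℝ).1 - ((a, x₀) : ℝ × ℝ).1)
          * (((b, x₀) : ℝ × ℝ).2 - ((a, x₀) : ℝ × ℝ).2) = 2 := by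
      simp only
      rw [sub_self, mul_zero, sub_zero, mul_comm, hdet]
    refine ⟨(a, x₀), ha', (b, x₀), hb', (z.2, z.1), hz', ?_, ?_⟩
    · exact not_collinear_of_det _ _ _ (by rw [hdval]; norm_num)
    · rw [triangleArea, hdval]; norm_num
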